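/- Let k ≥ 2 be an integer and let G be a k-connected interval graph. Then G contains k pairwise disjoint connected dominating sets. -/

import Mathlib

open SimpleGraph

variable {V : Type*}

/-- `T` is a spanning tree of `G`: a subgraph on all of `V` that is connected and acyclic. -/
def IsSpanningTree (G T : SimpleGraph V) : Prop :=
  T ≤ G ∧ T.Connected ∧ T.IsAcyclic

/-- The set of inner vertices of `T` (degree at least 2). -/
def innerSet (T : SimpleGraph V) : Set V :=
  {v | 2 ≤ (T.neighborSet v).ncard}

/-- Vertices that are inner vertices of at least two trees of the family. -/
def innerMulti {k : ℕ} (T : Fin k → SimpleGraph V) : Set V :=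
  {v | ∃ i j : Fin k, i ≠ j ∧ v ∈ innerSet (T i) ∧ v ∈ innerSet (T j)}

/-- Edges that belong to at least two trees of the family. -/
def edgeMulti {k : ℕ} (T : Fin k → SimpleGraph V) : Set (Sym2 V) :=
  {e | ∃ i j : Fin k, i ≠ j ∧ e ∈ (T i).edgeSet ∧ e ∈ (T j).edgeSet}

/-- A connected dominating set. -/
def IsConnDomSet (G : SimpleGraph V) (D : Set V) : Prop :=
  (G.induce D).Connected ∧ ∀ v ∉ D, ∃ w ∈ D, G.Adj v w

/-- `G` is an interval graph: vertices can be assigned nonempty closed real intervals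
so that distinct vertices are adjacent iff their intervals intersect. -/
def IsIntervalGraph (G : SimpleGraph V) : Prop :=
  ∃ a b : V → ℝ, (∀ v, a v ≤ b v) ∧
    ∀ u v : V, u ≠ v → (G.Adj u v ↔ (a u ≤ b v ∧ a v ≤ b u))

/-- `G` is `k`-connected: it has at least `k + 1` vertices and removing any set of at
most `k - 1` vertices leaves a connected graph. -/
def IsKConnected [Fintype V] (G : SimpleGraph V) (k : ℕ) : Prop :=
  k + 1 ≤ Fintype.card V ∧
  ∀ A : Set V, A.ncard ≤ k - 1 → (G.induce (Aᶜ : Set V)).Connected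

/-! ### Auxiliary machinery -/

/-- The set of vertices whose interval contains the point `p`. -/
noncomputable def covSet [Fintype V] (a b : V → ℝ) (p : ℝ) : Finset V :=
  Finset.univ.filter (fun v => a v ≤ p ∧ p ≤ b v)

lemma mem_covSet [Fintype V] {a b : V → ℝ} {p : ℝ} {v : V} :
    v ∈ covSet a b p ↔ a v ≤ p ∧ p ≤ b v := by
  simp [covSet]

/-- The sweep invariant: `k` disjoint chains, each covering `[L, x]`, each consisting of
intervals with left endpoint `≤ x` and right endpoint `≥ L`, each having a unique
"frontier" interval reaching at least `x`. -/
structure SweepInv [Fintype V] (a b : V → ℝ) (k : ℕ) (L x : ℝ)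
    (D : Fin k → Finset V) : Prop where
  disj : ∀ i j, i ≠ j → Disjoint (D i) (D j)
  memb : ∀ i, ∀ v ∈ D i, a v ≤ x ∧ L ≤ b v
  cover : ∀ i, ∀ p, L ≤ p → p ≤ x → ∃ v ∈ D i, a v ≤ p ∧ p ≤ b v
  front : ∀ i, ∃ f ∈ D i, x ≤ b f ∧ ∀ v ∈ D i, v ≠ f → b v < x

lemma sweep_base [Fintype V] (a b : V → ℝ) (k : ℕ) (L : ℝ)
    (h : k ≤ (covSet a b L).card) : ∃ D : Fin k → Finset V, SweepInv a b k L L D := by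
  classical
  obtain ⟨t, hts, htc⟩ := Finset.exists_subset_card_eq h
  let e := Finset.equivFinOfCardEq htc
  refine ⟨fun i => {(e.symm i : V)}, ?_, ?_, ?_, ?_⟩
  · intro i j hij
    simp only [Finset.disjoint_singleton]
    intro hEq
    exact hij (e.symm.injective (Subtype.ext hEq))
  · intro i v hv
    rw [Finset.mem_singleton] at hv
    subst hv
    have := hts (e.symm i).2
    rw [mem_covSet] at this
    exact ⟨this.1, this.2⟩
  · intro i p hLp hpL
    have hpl : p = L := le_antisymm hpL hLp
    subst hpl
    refine ⟨(e.symm i : V), Finset.mem_singleton_self _, ?_⟩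
    have := hts (e.symm i).2
    rw [mem_covSet] at this
    exact this
  · intro i
    refine ⟨(e.symm i : V), Finset.mem_singleton_self _, ?_, ?_⟩
    · have := hts (e.symm i).2
      rw [mem_covSet] at this
      exact this.2
    · intro v hv hne
      exact absurd (Finset.mem_singleton.mp hv) hne

lemma sweep_step [Fintype V] (a b : V → ℝ) (k : ℕ) (L R y x : ℝ)
    (hLy : L ≤ y) (hyx : y < x) (hxR : x ≤ R)
    (hmul : ∀ p, L ≤ p → p < R → k ≤ (covSet a b p).card)
    (hgapa : ∀ v, a v ≤ y ∨ x ≤ a v) (hgapb : ∀ v, b v ≤ y ∨ x ≤ b v)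
    (D : Fin k → Finset V) (hD : SweepInv a b k L y D) :
    ∃ D' : Fin k → Finset V, SweepInv a b k L x D' := by
  classical
  rcases Nat.eq_zero_or_pos k with hk0 | hkpos
  · subst hk0
    exact ⟨D, ⟨fun i => i.elim0, fun i => i.elim0, fun i => i.elim0, fun i => i.elim0⟩⟩
  obtain ⟨f, hf⟩ := Classical.axiomOfChoice hD.front
  have hfmem : ∀ i, f i ∈ D i := fun i => (hf i).1
  have hfb : ∀ i, y ≤ b (f i) := fun i => (hf i).2.1
  have hfmax : ∀ i, ∀ v ∈ D i, v ≠ f i → b v < y := fun i => (hf i).2.2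
  set alive : Fin k → Prop := fun i => x ≤ b (f i) with halive
  set used : Finset V := Finset.univ.filter (fun v => ∃ i, v ∈ D i) with hused
  set mid : ℝ := (y + x) / 2 with hmid
  have hymid : y < mid := by rw [hmid]; linarith
  have hmidx : mid < x := by rw [hmid]; linarith
  have hcard : k ≤ (covSet a b mid).card :=
    hmul mid (le_trans hLy hymid.le) (lt_of_lt_of_le hmidx hxR)
  have hSm : ∀ v ∈ covSet a b mid, a v ≤ y ∧ x ≤ b v := by
    intro v hv
    rw [mem_covSet] at hv
    constructor
    · rcases hgapa v with h | h
      · exact h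
      · linarith [hv.1]
    · rcases hgapb v with h | h
      · linarith [hv.2]
      · exact h
  -- every used interval containing mid is an alive frontier
  have husedmid : ∀ v, v ∈ covSet a b mid → v ∈ used → ∃ i, v = f i ∧ alive i := by
    intro v hvc hvu
    rw [hused, Finset.mem_filter] at hvu
    obtain ⟨-, i, hvi⟩ := hvu
    have hbx : x ≤ b v := (hSm v hvc).2
    have hveq : v = f i := by
      by_contra hne
      have := hfmax i v hvi hne
      linarith
    exact ⟨i, hveq, show x ≤ b (f i) from hveq ▸ hbx⟩
  -- counting
  have hint : ((covSet a b mid) ∩ used).card ≤ (Finset.univ.filter alive).card := by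
    have hdef : ∀ v : V, v ∈ (covSet a b mid) ∩ used → ∃ i : Fin k, v = f i ∧ alive i := by
      intro v hv
      rw [Finset.mem_inter] at hv
      exact husedmid v hv.1 hv.2
    have hexidx : ∀ v : V, ∃ i : Fin k,
        (∃ j : Fin k, v = f j ∧ alive j) → (v = f i ∧ alive i) := by
      intro v
      by_cases h : ∃ j : Fin k, v = f j ∧ alive j
      · exact ⟨h.choose, fun _ => h.choose_spec⟩
      · exact ⟨⟨0, hkpos⟩, fun hc => absurd hc h⟩
    choose idx hidx using hexidx
    refine Finset.card_le_card_of_injOn idx ?_ ?_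
    · intro v hv
      simp only [Finset.mem_coe, Finset.coe_filter, Finset.mem_filter, Finset.mem_univ, true_and, Set.mem_setOf_eq]
      exact (hidx v (hdef v hv)).2
    · intro v hv w hw hvw
      have h1 := hidx v (hdef v (by exact_mod_cast hv))
      have h2 := hidx w (hdef w (by exact_mod_cast hw))
      rw [h1.1, h2.1, hvw]
  have hdeadcard : (Finset.univ.filter (fun i => ¬ alive i)).card ≤
      ((covSet a b mid) \ used).card := by
    have h1 : (Finset.univ.filter alive).card +
        (Finset.univ.filter (fun i => ¬ alive i)).card = k := by
      rw [Finset.card_filter_add_card_filter_not, Finset.card_univ, Fintype.card_fin]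
    have h2 : (covSet a b mid).card ≤
        ((covSet a b mid) \ used).card + ((covSet a b mid) ∩ used).card := by
      rw [← Finset.card_union_of_disjoint (Finset.sdiff_disjoint.mono_right
        Finset.inter_subset_right)]
      exact Finset.card_le_card (by rw [Finset.sdiff_union_inter])
    omega
  -- choose new frontiers for dead chains
  obtain ⟨W, hWsub, hWcard⟩ := Finset.exists_subset_card_eq hdeadcard
  let eqv := (Finset.equivOfCardEq hWcard).symm
  let g : Fin k → V := fun i =>
    if h : i ∈ Finset.univ.filter (fun i => ¬ alive i) then (eqv ⟨i, h⟩ : V) else f i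
  have hgdead : ∀ i, ¬ alive i → (g i ∈ (covSet a b mid) \ used ∧
      ∀ j, ¬ alive j → i ≠ j → g i ≠ g j) := by
    intro i hi
    have hmemi : i ∈ Finset.univ.filter (fun i => ¬ alive i) :=
      Finset.mem_filter.mpr ⟨Finset.mem_univ _, hi⟩
    constructor
    · rw [show g i = (eqv ⟨i, hmemi⟩ : V) from dif_pos hmemi]
      exact hWsub (eqv ⟨i, hmemi⟩).2
    · intro j hj hij
      have hmemj : j ∈ Finset.univ.filter (fun i => ¬ alive i) :=
        Finset.mem_filter.mpr ⟨Finset.mem_univ _, hj⟩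
      rw [show g i = (eqv ⟨i, hmemi⟩ : V) from dif_pos hmemi,
        show g j = (eqv ⟨j, hmemj⟩ : V) from dif_pos hmemj]
      intro hEq
      exact hij (congrArg Subtype.val (eqv.injective (Subtype.ext hEq)))
  have hgprops : ∀ i, ¬ alive i → a (g i) ≤ y ∧ x ≤ b (g i) ∧ ∀ j, g i ∉ D j := by
    intro i hi
    obtain ⟨hmem, -⟩ := hgdead i hi
    rw [Finset.mem_sdiff] at hmem
    obtain ⟨hcov, hnu⟩ := hmem
    refine ⟨(hSm _ hcov).1, (hSm _ hcov).2, ?_⟩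
    intro j hj
    exact hnu (by rw [hused, Finset.mem_filter]; exact ⟨Finset.mem_univ _, j, hj⟩)
  -- the new family
  refine ⟨fun i => if alive i then D i else insert (g i) (D i), ?_, ?_, ?_, ?_⟩
  · intro i j hij
    rw [Finset.disjoint_left]
    intro v hvi hvj
    have hmemD : ∀ l : Fin k, ∀ w, w ∈ (if alive l then D l else insert (g l) (D l)) →
        w ∈ D l ∨ (¬ alive l ∧ w = g l) := by
      intro l w hw
      by_cases hl : alive l
      · rw [if_pos hl] at hw; exact Or.inl hw
      · rw [if_neg hl, Finset.mem_insert] at hw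
        rcases hw with h | h
        · exact Or.inr ⟨hl, h⟩
        · exact Or.inl h
    rcases hmemD i v hvi with h1 | ⟨hdi, h1⟩ <;> rcases hmemD j v hvj with h2 | ⟨hdj, h2⟩
    · exact (Finset.disjoint_left.mp (hD.disj i j hij)) h1 h2
    · exact (hgprops j hdj).2.2 i (h2 ▸ h1)
    · exact (hgprops i hdi).2.2 j (h1 ▸ h2)
    · exact ((hgdead i hdi).2 j hdj hij) (h1 ▸ h2)
  · intro i v hv
    by_cases hl : alive i
    · rw [if_pos hl] at hv
      obtain ⟨h1, h2⟩ := hD.memb i v hv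
      exact ⟨le_trans h1 hyx.le, h2⟩
    · rw [if_neg hl, Finset.mem_insert] at hv
      rcases hv with h | h
      · subst h
        obtain ⟨hga, hgb, -⟩ := hgprops i hl
        exact ⟨le_trans hga hyx.le, by linarith⟩
      · obtain ⟨h1, h2⟩ := hD.memb i v h
        exact ⟨le_trans h1 hyx.le, h2⟩
  · intro i p hLp hpx
    rcases le_or_gt p y with hpy | hyp
    · obtain ⟨v, hv, hvp⟩ := hD.cover i p hLp hpy
      refine ⟨v, ?_, hvp⟩
      by_cases hl : alive i
      · rw [if_pos hl]; exact hv
      · rw [if_neg hl]; exact Finset.mem_insert_of_mem hv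
    · by_cases hl : alive i
      · refine ⟨f i, by rw [if_pos hl]; exact hfmem i, ?_, le_trans hpx hl⟩
        exact le_trans (hD.memb i (f i) (hfmem i)).1 hyp.le
      · refine ⟨g i, by rw [if_neg hl]; exact Finset.mem_insert_self _ _, ?_, ?_⟩
        · exact le_trans (hgprops i hl).1 hyp.le
        · exact le_trans hpx (hgprops i hl).2.1
  · intro i
    by_cases hl : alive i
    · refine ⟨f i, by rw [if_pos hl]; exact hfmem i, hl, ?_⟩
      intro v hv hne
      rw [if_pos hl] at hv
      exact lt_trans (hfmax i v hv hne) hyx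
    · refine ⟨g i, by rw [if_neg hl]; exact Finset.mem_insert_self _ _, (hgprops i hl).2.1, ?_⟩
      intro v hv hne
      rw [if_neg hl, Finset.mem_insert] at hv
      rcases hv with h | h
      · exact absurd h hne
      · by_cases hvf : v = f i
        · subst hvf
          exact lt_of_not_ge hl
        · exact lt_trans (hfmax i v h hvf) hyx

lemma sweep_build [Fintype V] (a b : V → ℝ) (k : ℕ) (L R : ℝ) (hLR : L < R)
    (hR : ∃ w, a w = R)
    (hmul : ∀ p, L ≤ p → p < R → k ≤ (covSet a b p).card) :
    ∃ D : Fin k → Finset V, SweepInv a b k L R D := by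
  classical
  set crit : Finset ℝ :=
    insert L (((Finset.univ.image a) ∪ (Finset.univ.image b)).filter (fun e => e ≤ R))
    with hcrit
  have hLcrit : L ∈ crit := Finset.mem_insert_self _ _
  have hRcrit : R ∈ crit := by
    obtain ⟨w, hw⟩ := hR
    apply Finset.mem_insert_of_mem
    rw [Finset.mem_filter]
    exact ⟨Finset.mem_union_left _ (Finset.mem_image.mpr ⟨w, Finset.mem_univ _, hw⟩), le_refl _⟩
  have hacrit : ∀ v, a v ≤ R → a v ∈ crit := by
    intro v hv
    apply Finset.mem_insert_of_mem
    rw [Finset.mem_filter]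
    exact ⟨Finset.mem_union_left _ (Finset.mem_image.mpr ⟨v, Finset.mem_univ _, rfl⟩), hv⟩
  have hbcrit : ∀ v, b v ≤ R → b v ∈ crit := by
    intro v hv
    apply Finset.mem_insert_of_mem
    rw [Finset.mem_filter]
    exact ⟨Finset.mem_union_right _ (Finset.mem_image.mpr ⟨v, Finset.mem_univ _, rfl⟩), hv⟩
  have key : ∀ n x, (crit.filter (fun e => e < x)).card = n → x ∈ crit → L ≤ x → x ≤ R →
      ∃ D : Fin k → Finset V, SweepInv a b k L x D := by
    intro n
    induction n using Nat.strong_induction_on with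
    | _ n ih =>
      intro x hn hx hLx hxR
      rcases eq_or_lt_of_le hLx with hEq | hLx'
      · subst hEq
        exact sweep_base a b k L (hmul L le_rfl hLR)
      · set F := crit.filter (fun e => L ≤ e ∧ e < x) with hF
        have hLF : L ∈ F := Finset.mem_filter.mpr ⟨hLcrit, le_rfl, hLx'⟩
        have hFne : F.Nonempty := ⟨L, hLF⟩
        set y := F.max' hFne with hy
        have hyF : y ∈ F := F.max'_mem hFne
        rw [hF, Finset.mem_filter] at hyF
        obtain ⟨hycrit, hLy, hyx⟩ := hyF
        have hmeas : (crit.filter (fun e => e < y)).card < n := by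
          rw [← hn]
          apply Finset.card_lt_card
          rw [Finset.ssubset_iff_of_subset
            (fun e he => Finset.mem_filter.mpr ⟨(Finset.mem_filter.mp he).1, lt_trans (Finset.mem_filter.mp he).2 hyx⟩)]
          exact ⟨y, Finset.mem_filter.mpr ⟨hycrit, hyx⟩,
            fun hmem => absurd (Finset.mem_filter.mp hmem).2 (lt_irrefl y)⟩
        obtain ⟨D, hD⟩ := ih _ hmeas y rfl hycrit hLy (le_trans hyx.le hxR)
        have hgapa : ∀ v, a v ≤ y ∨ x ≤ a v := by
          intro v
          by_contra hcon
          push_neg at hcon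
          obtain ⟨h1, h2⟩ := hcon
          have hvF : a v ∈ F := Finset.mem_filter.mpr
            ⟨hacrit v (le_trans h2.le hxR), le_trans hLy h1.le, h2⟩
          exact absurd (F.le_max' _ hvF) (not_le_of_gt h1)
        have hgapb : ∀ v, b v ≤ y ∨ x ≤ b v := by
          intro v
          by_contra hcon
          push_neg at hcon
          obtain ⟨h1, h2⟩ := hcon
          have hvF : b v ∈ F := Finset.mem_filter.mpr
            ⟨hbcrit v (le_trans h2.le hxR), le_trans hLy h1.le, h2⟩
          exact absurd (F.le_max' _ hvF) (not_le_of_gt h1)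
        exact sweep_step a b k L R y x hLy hyx hxR hmul hgapa hgapb D hD
  exact key _ R rfl hRcrit hLR.le le_rfl


/-- A finite family of intervals, each meeting `[L, R]`, which jointly covers `[L, R]`,
induces a connected subgraph of the associated interval graph. -/
lemma induce_connected_of_cover [Fintype V] (G : SimpleGraph V) (a b : V → ℝ)
    (hab : ∀ v, a v ≤ b v)
    (hadj : ∀ u v : V, u ≠ v → (G.Adj u v ↔ (a u ≤ b v ∧ a v ≤ b u)))
    (L R : ℝ) (hLR : L ≤ R) (D : Finset V)
    (hmeets : ∀ v ∈ D, a v ≤ R ∧ L ≤ b v)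
    (hcov : ∀ p, L ≤ p → p ≤ R → ∃ v ∈ D, a v ≤ p ∧ p ≤ b v) :
    (G.induce (↑D : Set V)).Connected := by
  classical
  obtain ⟨u₀, hu₀D, hu₀a, hu₀b⟩ := hcov L le_rfl hLR
  set S : Set V := ↑D with hS
  have hu₀S : u₀ ∈ S := Finset.mem_coe.mpr hu₀D
  set reach : V → Prop := fun z =>
    ∃ hz : z ∈ S, (G.induce S).Reachable ⟨u₀, hu₀S⟩ ⟨z, hz⟩ with hreachdef
  have hadjS : ∀ (v w : V) (hv : v ∈ S) (hw : w ∈ S), v ≠ w →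
      (∃ q, a v ≤ q ∧ q ≤ b v ∧ a w ≤ q ∧ q ≤ b w) →
      (G.induce S).Adj ⟨v, hv⟩ ⟨w, hw⟩ := by
    rintro v w hv hw hne ⟨q, h1, h2, h3, h4⟩
    show G.Adj v w
    exact (hadj v w hne).mpr ⟨le_trans h1 h4, le_trans h3 h2⟩
  have hreach_u₀ : reach u₀ := ⟨hu₀S, Reachable.refl _⟩
  -- extend reachability over a shared point
  have hreach_ext : ∀ z, reach z → ∀ w ∈ S, ∀ q, a z ≤ q → q ≤ b z → a w ≤ q → q ≤ b w →
      reach w := by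
    rintro z ⟨hzS, hzr⟩ w hwS q h1 h2 h3 h4
    by_cases hzw : z = w
    · subst hzw; exact ⟨hwS, hzr⟩
    · exact ⟨hwS, hzr.trans (hadjS z w hzS hwS hzw ⟨q, h1, h2, h3, h4⟩).reachable⟩
  -- along a walk, the reachable family covers [L, b ·]
  have main : ∀ (s t : ↑S) (_ : (G.induce S).Walk s t),
      (∀ p, L ≤ p → p ≤ b (s : V) → ∃ w, reach w ∧ a w ≤ p ∧ p ≤ b w) →
      reach (s : V) →
      (∀ p, L ≤ p → p ≤ b (t : V) → ∃ w, reach w ∧ a w ≤ p ∧ p ≤ b w) := by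
    intro s t wk
    induction wk with
    | nil => intro h _; exact h
    | @cons s₁ v₁ t₁ h q ih =>
      intro hPs hrs
      have hvS : (v₁ : V) ∈ S := v₁.2
      have hGadj : G.Adj ↑s₁ ↑v₁ := h
      have hiv := (hadj ↑s₁ ↑v₁ hGadj.ne).mp hGadj
      have hrv : reach (v₁ : V) := by
        obtain ⟨hsS, hsr⟩ := hrs
        refine ⟨hvS, hsr.trans ?_⟩
        have : (⟨(s₁ : V), hsS⟩ : ↑S) = s₁ := Subtype.ext rfl
        rw [this]
        exact h.reachable
      have hPv : ∀ p, L ≤ p → p ≤ b (v₁ : V) → ∃ w, reach w ∧ a w ≤ p ∧ p ≤ b w := by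
        intro p hLp hpb
        rcases le_or_gt p (b (s₁ : V)) with h1 | h1
        · exact hPs p hLp h1
        · exact ⟨↑v₁, hrv, le_trans hiv.2 h1.le, hpb⟩
      exact ih hPv hrv
  have hP : ∀ z, reach z → ∀ p, L ≤ p → p ≤ b z → ∃ w, reach w ∧ a w ≤ p ∧ p ≤ b w := by
    rintro z ⟨hzS, ⟨wk⟩⟩
    refine main ⟨u₀, hu₀S⟩ ⟨z, hzS⟩ wk ?_ hreach_u₀
    intro p hLp hpb
    exact ⟨u₀, hreach_u₀, le_trans hu₀a hLp, hpb⟩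
  -- take the reach-vertex with maximal right endpoint
  set Tf : Finset V := D.filter (fun z => reach z) with hTf
  have hu₀Tf : u₀ ∈ Tf := Finset.mem_filter.mpr ⟨hu₀D, hreach_u₀⟩
  obtain ⟨zm, hzmTf, hzmmax⟩ := Finset.exists_max_image Tf b ⟨u₀, hu₀Tf⟩
  obtain ⟨hzmD, hzmreach⟩ := Finset.mem_filter.mp hzmTf
  set β : ℝ := b zm with hβ
  have hLβ : L ≤ β := (hmeets zm hzmD).2
  -- any vertex of D whose interval meets [L, β] is reachable
  have hreach_of_cov : ∀ z ∈ D, ∀ q, a z ≤ q → q ≤ b z → L ≤ q → q ≤ β → reach z := by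
    intro z hzD q h1 h2 hLq hqβ
    obtain ⟨w, hwreach, hwa, hwb⟩ := hP zm hzmreach q hLq hqβ
    exact hreach_ext w hwreach z (Finset.mem_coe.mpr hzD) q hwa hwb h1 h2
  -- β reaches R
  have hβR : R ≤ β := by
    by_contra hcon
    push_neg at hcon
    obtain ⟨zR, hzRD, hzRa, hzRb⟩ := hcov R hLR le_rfl
    have hzRgt : β < a zR := by
      by_contra h
      push_neg at h
      have : reach zR := hreach_of_cov zR hzRD β h (le_trans hcon.le hzRb) hLβ le_rfl
      have : b zR ≤ β := hzmmax zR (Finset.mem_filter.mpr ⟨hzRD, this⟩)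
      linarith
    set E : Finset V := D.filter (fun z => β < a z) with hE
    have hEne : E.Nonempty := ⟨zR, Finset.mem_filter.mpr ⟨hzRD, hzRgt⟩⟩
    obtain ⟨zα, hzαE, hzαmin⟩ := Finset.exists_min_image E a hEne
    obtain ⟨hzαD, hzαgt⟩ := Finset.mem_filter.mp hzαE
    have hαR : a zα ≤ R := by
      calc a zα ≤ a zR := hzαmin zR (Finset.mem_filter.mpr ⟨hzRD, hzRgt⟩)
        _ ≤ R := hzRa
    set pm : ℝ := (β + a zα) / 2 with hpm
    have h1 : β < pm := by rw [hpm]; linarith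
    have h2 : pm < a zα := by rw [hpm]; linarith
    obtain ⟨z, hzD, hza, hzb⟩ := hcov pm (le_trans hLβ h1.le) (le_trans h2.le hαR)
    rcases le_or_gt (a z) β with hc | hc
    · have : reach z := hreach_of_cov z hzD β hc (le_trans h1.le hzb) hLβ le_rfl
      have : b z ≤ β := hzmmax z (Finset.mem_filter.mpr ⟨hzD, this⟩)
      linarith
    · have : a zα ≤ a z := hzαmin z (Finset.mem_filter.mpr ⟨hzD, hc⟩)
      linarith
  have hallreach : ∀ v ∈ D, reach v := by
    intro v hvD
    have h1 : a v ≤ max L (a v) := le_max_right _ _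
    have h2 : max L (a v) ≤ b v := max_le (hmeets v hvD).2 (hab v)
    have h3 : L ≤ max L (a v) := le_max_left _ _
    have h4 : max L (a v) ≤ β := max_le (le_trans hLR hβR) (le_trans (hmeets v hvD).1 hβR)
    exact hreach_of_cov v hvD _ h1 h2 h3 h4
  rw [connected_iff]
  refine ⟨?_, ⟨⟨u₀, hu₀S⟩⟩⟩
  intro z w
  obtain ⟨hz1, hz2⟩ := hallreach ↑z (Finset.mem_coe.mp z.2)
  obtain ⟨hw1, hw2⟩ := hallreach ↑w (Finset.mem_coe.mp w.2)
  have ez : (⟨(z : V), hz1⟩ : ↑S) = z := Subtype.ext rfl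
  have ew : (⟨(w : V), hw1⟩ : ↑S) = w := Subtype.ext rfl
  rw [ez] at hz2
  rw [ew] at hw2
  exact hz2.symm.trans hw2

lemma mult_interior [Fintype V] (G : SimpleGraph V) (a b : V → ℝ) (k : ℕ)
    (hab : ∀ v, a v ≤ b v)
    (hadj : ∀ u v : V, u ≠ v → (G.Adj u v ↔ (a u ≤ b v ∧ a v ≤ b u)))
    (hconn : IsKConnected G k)
    {L R : ℝ} (u w : V) (hu : b u = L) (hw : a w = R)
    (p : ℝ) (hLp : L < p) (hpR : p < R) : k ≤ (covSet a b p).card := by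
  classical
  by_contra hlt
  push_neg at hlt
  have hA : ((↑(covSet a b p) : Set V)).ncard ≤ k - 1 := by
    rw [Set.ncard_coe_finset]; omega
  have hc := hconn.2 _ hA
  set A : Set V := ↑(covSet a b p) with hAdef
  have huA : u ∈ Aᶜ := by
    intro hmem
    have := (mem_covSet.mp (Finset.mem_coe.mp hmem)).2
    rw [hu] at this
    linarith
  have hwA : w ∈ Aᶜ := by
    intro hmem
    have := (mem_covSet.mp (Finset.mem_coe.mp hmem)).1
    rw [hw] at this
    linarith
  have hreach := hc.preconnected ⟨u, huA⟩ ⟨w, hwA⟩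
  have main : ∀ (s t : ↑(Aᶜ)) (_ : (G.induce Aᶜ).Walk s t), b ↑s < p → b ↑t < p := by
    intro s t wk
    induction wk with
    | nil => exact id
    | @cons s₁ v₁ t₁ h q ih =>
      intro hs
      apply ih
      have hGadj : G.Adj ↑s₁ ↑v₁ := h
      have hiv := (hadj ↑s₁ ↑v₁ hGadj.ne).mp hGadj
      have hvA : (v₁ : V) ∈ Aᶜ := v₁.2
      have hnc : ¬ (a (v₁ : V) ≤ p ∧ p ≤ b (v₁ : V)) := by
        intro hcon
        exact hvA (Finset.mem_coe.mpr (mem_covSet.mpr hcon))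
      rcases not_and_or.mp hnc with hcase | hcase
      · push_neg at hcase
        linarith [hiv.2]
      · push_neg at hcase
        exact hcase
  obtain ⟨wk⟩ := hreach
  have hbw := main _ _ wk (by rw [hu]; exact hLp)
  have := hab w
  rw [hw] at this
  simp only at hbw
  linarith

lemma mult_left [Fintype V] (G : SimpleGraph V) (a b : V → ℝ) (k : ℕ)
    (hab : ∀ v, a v ≤ b v)
    (hadj : ∀ u v : V, u ≠ v → (G.Adj u v ↔ (a u ≤ b v ∧ a v ≤ b u)))
    (hconn : IsKConnected G k)
    {L R : ℝ} (u w : V) (hu : b u = L) (hw : a w = R) (hLR : L < R) :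
    k ≤ (covSet a b L).card := by
  classical
  set E : Finset ℝ :=
    (((Finset.univ.image a) ∪ (Finset.univ.image b)).filter (fun e => L < e)) with hE
  have hRE : R ∈ E := by
    rw [hE, Finset.mem_filter]
    exact ⟨Finset.mem_union_left _ (Finset.mem_image.mpr ⟨w, Finset.mem_univ _, hw⟩), hLR⟩
  have hEne : E.Nonempty := ⟨R, hRE⟩
  set δ : ℝ := E.min' hEne with hδ
  have hδE : δ ∈ E := E.min'_mem hEne
  have hLδ : L < δ := (Finset.mem_filter.mp hδE).2
  have hδR : δ ≤ R := E.min'_le R hRE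
  set q : ℝ := (L + δ) / 2 with hq
  have h1 : L < q := by rw [hq]; linarith
  have h2 : q < δ := by rw [hq]; linarith
  have h3 : q < R := lt_of_lt_of_le h2 hδR
  have hcard := mult_interior G a b k hab hadj hconn u w hu hw q h1 h3
  refine le_trans hcard (Finset.card_le_card ?_)
  intro v hv
  rw [mem_covSet] at hv ⊢
  constructor
  · by_contra hcon
    push_neg at hcon
    have hvE : a v ∈ E := by
      rw [hE, Finset.mem_filter]
      exact ⟨Finset.mem_union_left _ (Finset.mem_image.mpr ⟨v, Finset.mem_univ _, rfl⟩), hcon⟩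
    have := E.min'_le _ hvE
    linarith [hv.1]
  · linarith [hv.2]

/-- Every `k`-connected interval graph (k ≥ 2) contains `k` pairwise disjoint
connected dominating sets. -/
theorem interval_kconnected_disjoint_cds [Fintype V] (G : SimpleGraph V)
    (k : ℕ) (hk : 2 ≤ k) (hint : IsIntervalGraph G) (hconn : IsKConnected G k) :
    ∃ D : Fin k → Set V, (∀ i, IsConnDomSet G (D i)) ∧
      ∀ i j : Fin k, i ≠ j → Disjoint (D i) (D j) := by
  classical
  obtain ⟨a, b, hab, hadj⟩ := hint
  have hcard := hconn.1
  have hVpos : 0 < Fintype.card V := by omega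
  haveI hVne : Nonempty V := Fintype.card_pos_iff.mp hVpos
  have hne : (Finset.univ : Finset V).Nonempty := Finset.univ_nonempty
  set L : ℝ := Finset.univ.inf' hne b with hL
  set R : ℝ := Finset.univ.sup' hne a with hR
  have haR : ∀ v, a v ≤ R := fun v => Finset.le_sup' a (Finset.mem_univ v)
  have hbL : ∀ v, L ≤ b v := fun v => Finset.inf'_le b (Finset.mem_univ v)
  obtain ⟨u, -, hu⟩ := Finset.exists_mem_eq_inf' hne b
  obtain ⟨w, -, hw⟩ := Finset.exists_mem_eq_sup' hne a
  rcases le_or_gt R L with hRL | hLR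
  · -- complete graph case: singletons are connected dominating sets
    have hkV : Fintype.card (Fin k) ≤ Fintype.card V := by
      rw [Fintype.card_fin]; omega
    obtain ⟨σ⟩ := Function.Embedding.nonempty_iff_card_le.mpr hkV
    refine ⟨fun i => {σ i}, ?_, ?_⟩
    · intro i
      constructor
      · rw [connected_iff]
        refine ⟨?_, ⟨⟨σ i, rfl⟩⟩⟩
        intro x y
        have hxy : x = y := Subtype.ext (x.2.trans y.2.symm)
        rw [hxy]
      · intro v hv
        have hvne : v ≠ σ i := hv
        refine ⟨σ i, rfl, (hadj v (σ i) hvne).mpr ⟨?_, ?_⟩⟩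
        · exact le_trans (haR v) (le_trans hRL (hbL (σ i)))
        · exact le_trans (haR (σ i)) (le_trans hRL (hbL v))
    · intro i j hij
      rw [Set.disjoint_singleton]
      exact fun hEq => hij (σ.injective hEq)
  · -- main case
    have hmul : ∀ p, L ≤ p → p < R → k ≤ (covSet a b p).card := by
      intro p h1 h2
      rcases eq_or_lt_of_le h1 with hEq | h1'
      · rw [← hEq]
        exact mult_left G a b k hab hadj hconn u w hu.symm hw.symm hLR
      · exact mult_interior G a b k hab hadj hconn u w hu.symm hw.symm p h1' h2
    obtain ⟨D, hD⟩ := sweep_build a b k L R hLR ⟨w, hw.symm⟩ hmul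
    refine ⟨fun i => ↑(D i), ?_, ?_⟩
    · intro i
      constructor
      · exact induce_connected_of_cover G a b hab hadj L R hLR.le (D i)
          (fun v hv => hD.memb i v hv) (hD.cover i)
      · intro v hv
        have hq1 : L ≤ max L (a v) := le_max_left _ _
        have hq2 : max L (a v) ≤ R := max_le hLR.le (haR v)
        obtain ⟨z, hzD, hza, hzb⟩ := hD.cover i (max L (a v)) hq1 hq2
        have hvz : v ≠ z := fun hEq => hv (hEq ▸ Finset.mem_coe.mpr hzD)
        refine ⟨z, Finset.mem_coe.mpr hzD, (hadj v z hvz).mpr ⟨?_, ?_⟩⟩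
        · exact le_trans (le_max_right L (a v)) hzb
        · exact le_trans hza (max_le (hbL v) (hab v))
    · exact fun i j hij => Finset.disjoint_coe.mpr (hD.disj i j hij)
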